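/- Let l ≥ 1, m ≥ 2 and n = l+m. The sum, over all words of length n over {P,Q} with exactly l letters P and m letters Q that begin with Q and end with Q, of the matrix products of their letters, equals −(1/√2)^{n-1} · (-1)^m · [ Σ_{γ=1}^{min(l,m-1)} (-1)^γ · C(l-1,γ-1) · C(m-1,γ) ] · Q, where C(·,·) denotes the binomial coefficient. -/
import Mathlib

noncomputable section
open Matrix Finset

/-- `P = (1/√2)·[[1,1],[0,0]]` -/
def matP : Matrix (Fin 2) (Fin 2) ℂ := (Real.sqrt 2 : ℂ)⁻¹ • !![1, 1; 0, 0]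

/-- `Q = (1/√2)·[[0,0],[1,-1]]` -/
def matQ : Matrix (Fin 2) (Fin 2) ℂ := (Real.sqrt 2 : ℂ)⁻¹ • !![0, 0; 1, -1]

/-- `R = (1/√2)·[[1,-1],[0,0]]` -/
def matR : Matrix (Fin 2) (Fin 2) ℂ := (Real.sqrt 2 : ℂ)⁻¹ • !![1, -1; 0, 0]

/-- `S = (1/√2)·[[0,0],[1,1]]` -/
def matS : Matrix (Fin 2) (Fin 2) ℂ := (Real.sqrt 2 : ℂ)⁻¹ • !![0, 0; 1, 1]

/-- `Ξ(l,m)`: the sum, over all words of length `l+m` over the alphabet `{P,Q}` with exactly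
`l` letters `P` and `m` letters `Q` (a word being encoded by the set `s` of positions of its
letters `P`), of the ordered matrix product of the letters of the word. -/
def Xi (l m : ℕ) : Matrix (Fin 2) (Fin 2) ℂ :=
  ∑ s ∈ (Finset.univ : Finset (Fin (l + m))).powersetCard l,
    (List.ofFn (fun i : Fin (l + m) => if i ∈ s then matP else matQ)).prod

def Xi' (n l : ℕ) : Matrix (Fin 2) (Fin 2) ℂ :=
  ∑ s ∈ (Finset.univ : Finset (Fin n)).powersetCard l,
    (List.ofFn (fun i : Fin n => if i ∈ s then matP else matQ)).prod

lemma Xi'_zero_of_lt {n l : ℕ} (h : n < l) : Xi' n l = 0 := by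
  rw [Xi', Finset.powersetCard_eq_empty.2 (by simpa using h), Finset.sum_empty]

lemma Xi'_zero_zero : Xi' 0 0 = 1 := by
  simp [Xi']

lemma Xi'_succ_zero (n : ℕ) : Xi' (n + 1) 0 = matQ * Xi' n 0 := by
  simp only [Xi', Finset.powersetCard_zero, Finset.sum_singleton]
  rw [List.ofFn_succ, List.prod_cons]
  simp

lemma Xi'_succ_succ (n l : ℕ) :
    Xi' (n + 1) (l + 1) = matP * Xi' n l + matQ * Xi' n (l + 1) := by
  set eS : Fin n ↪ Fin (n+1) := ⟨Fin.succ, Fin.succ_injective n⟩ with heS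
  have h0 : (0 : Fin (n+1)) ∉ (Finset.univ : Finset (Fin n)).map eS := by
    simp only [Finset.mem_map, heS, Function.Embedding.coeFn_mk]
    rintro ⟨i, -, hi⟩
    exact Fin.succ_ne_zero i hi
  simp only [Xi']
  rw [Fin.univ_succ, Finset.cons_eq_insert, Finset.powersetCard_succ_insert h0]
  have hdisj : Disjoint (((Finset.univ : Finset (Fin n)).map eS).powersetCard (l+1))
      (((((Finset.univ : Finset (Fin n)).map eS).powersetCard l)).image (insert 0)) := by
    rw [Finset.disjoint_left]
    intro s hs hs'
    rw [Finset.mem_powersetCard] at hs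
    obtain ⟨t, ht, rfl⟩ := Finset.mem_image.1 hs'
    exact h0 (hs.1 (Finset.mem_insert_self 0 t))
  have hME : ∀ t : Finset (Fin n), (Finset.mapEmbedding eS).toEmbedding t = t.map eS :=
    fun _ => rfl
  have hinj : ∀ a ∈ ((Finset.univ : Finset (Fin n)).map eS).powersetCard l,
      ∀ b ∈ ((Finset.univ : Finset (Fin n)).map eS).powersetCard l,
      insert 0 a = insert 0 b → a = b := by
    intro a ha b hb hab
    have ha' : (0:Fin (n+1)) ∉ a := fun h => h0 ((Finset.mem_powersetCard.1 ha).1 h)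
    have hb' : (0:Fin (n+1)) ∉ b := fun h => h0 ((Finset.mem_powersetCard.1 hb).1 h)
    have := congrArg (fun s => Finset.erase s 0) hab
    simpa [Finset.erase_insert ha', Finset.erase_insert hb'] using this
  rw [Finset.sum_union hdisj, add_comm, Finset.sum_image hinj]
  congr 1
  · -- P part
    rw [Finset.powersetCard_map, Finset.sum_map, Finset.mul_sum]
    refine Finset.sum_congr rfl fun t ht => ?_
    simp only [hME]
    rw [List.ofFn_succ, List.prod_cons]
    rw [if_pos (Finset.mem_insert_self _ _)]
    have hfun : (fun i : Fin n => if i.succ ∈ insert 0 (t.map eS) then matP else matQ)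
        = (fun i : Fin n => if i ∈ t then matP else matQ) := by
      funext i
      have : i.succ ∈ insert 0 (t.map eS) ↔ i ∈ t := by
        simp [heS, Fin.succ_inj, Fin.succ_ne_zero]
      simp only [this]
    rw [hfun]
  · -- Q part
    rw [Finset.powersetCard_map, Finset.sum_map, Finset.mul_sum]
    refine Finset.sum_congr rfl fun t ht => ?_
    simp only [hME]
    rw [List.ofFn_succ, List.prod_cons]
    have h0t : (0 : Fin (n+1)) ∉ t.map eS := fun h =>
      h0 (Finset.map_subset_map.2 (Finset.subset_univ t) h)
    rw [if_neg h0t]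
    have hfun : (fun i : Fin n => if i.succ ∈ t.map eS then matP else matQ)
        = (fun i : Fin n => if i ∈ t then matP else matQ) := by
      funext i
      have : i.succ ∈ t.map eS ↔ i ∈ t := by
        simp [heS, Fin.succ_inj]
      simp only [this]
    rw [hfun]

def Uc (l m : ℕ) : ℂ := ∑ h ∈ Finset.range l, (-1:ℂ)^(h+1) * ((l-1).choose h) * (m.choose (h+1))
def Vc (l m : ℕ) : ℂ := ∑ h ∈ Finset.range l, (-1:ℂ)^(h+1) * ((l-1).choose h) * (m.choose h)

lemma Uc_succ (l m : ℕ) : Uc l (m+1) = Uc l m + Vc l m := by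
  rw [Uc, Uc, Vc, ← Finset.sum_add_distrib]
  refine Finset.sum_congr rfl fun h _ => ?_
  rw [Nat.choose_succ_succ]
  push_cast
  ring

lemma Vc_succ (l m : ℕ) : Vc (l+1+1) m = Vc (l+1) m - Uc (l+1) m := by
  have hV2 : Vc (l+1+1) m
      = (∑ h ∈ Finset.range (l+1), ((-1:ℂ)^h * (l.choose h) * (m.choose (h+1))
          + (-1:ℂ)^h * (l.choose (h+1)) * (m.choose (h+1)))) + (-1) := by
    rw [Vc, Finset.sum_range_succ']
    congr 1
    · refine Finset.sum_congr rfl fun h _ => ?_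
      show (-1:ℂ)^(h+1+1) * (((l+1+1-1).choose (h+1) : ℕ) : ℂ) * ((m.choose (h+1) : ℕ) : ℂ) = _
      have hc : (l+1+1-1).choose (h+1) = l.choose h + l.choose (h+1) := Nat.choose_succ_succ _ _
      rw [hc]; push_cast; ring
    · norm_num
  have hU : (∑ h ∈ Finset.range (l+1), (-1:ℂ)^h * (l.choose h) * (m.choose (h+1)))
      = - Uc (l+1) m := by
    rw [Uc, ← Finset.sum_neg_distrib]
    refine Finset.sum_congr rfl fun h _ => ?_
    show (-1:ℂ)^h * (((l+1-1).choose h : ℕ) : ℂ) * _ = _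
    have : l+1-1 = l := rfl
    rw [this]; ring
  have hS2 : (∑ h ∈ Finset.range (l+1), (-1:ℂ)^h * (l.choose (h+1)) * (m.choose (h+1)))
      = Vc (l+1) m + 1 := by
    rw [Finset.sum_range_succ, Nat.choose_succ_self]
    rw [Vc, Finset.sum_range_succ']
    push_cast
    have hterm : ∀ x : ℕ, (-1:ℂ)^(x+1+1) * ((l.choose (x+1) : ℕ) : ℂ) * ((m.choose (x+1) : ℕ) : ℂ)
        = (-1:ℂ)^x * ((l.choose (x+1) : ℕ) : ℂ) * ((m.choose (x+1) : ℕ) : ℂ) := fun x => by ring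
    rw [Finset.sum_congr rfl fun x _ => hterm x]
    simp
  rw [hV2, Finset.sum_add_distrib, hU, hS2]
  ring

lemma P_mul_01 (M : Matrix (Fin 2) (Fin 2) ℂ) :
    (matP * M) 0 1 = (Real.sqrt 2:ℂ)⁻¹ * (M 0 1 + M 1 1) := by
  simp [matP, Matrix.mul_apply, Fin.sum_univ_succ]
  ring

lemma P_mul_11 (M : Matrix (Fin 2) (Fin 2) ℂ) : (matP * M) 1 1 = 0 := by
  simp [matP, Matrix.mul_apply, Fin.sum_univ_succ]

lemma Q_mul_01 (M : Matrix (Fin 2) (Fin 2) ℂ) : (matQ * M) 0 1 = 0 := by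
  simp [matQ, Matrix.mul_apply, Fin.sum_univ_succ]

lemma Q_mul_11 (M : Matrix (Fin 2) (Fin 2) ℂ) :
    (matQ * M) 1 1 = (Real.sqrt 2:ℂ)⁻¹ * (M 0 1 - M 1 1) := by
  simp [matQ, Matrix.mul_apply, Fin.sum_univ_succ]
  ring

lemma QMQ (M : Matrix (Fin 2) (Fin 2) ℂ) :
    matQ * M * matQ = ((Real.sqrt 2:ℂ)⁻¹ * (M 0 1 - M 1 1)) • matQ := by
  ext i j
  fin_cases i <;> fin_cases j <;>
    simp [matQ, Matrix.mul_apply, Matrix.vecMul, dotProduct, Fin.sum_univ_succ] <;> ring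

lemma Xi'_zero_col (n : ℕ) :
    Xi' n 0 0 1 = 0 ∧ Xi' n 0 1 1 = ((Real.sqrt 2:ℂ)⁻¹)^n * (-1:ℂ)^n := by
  induction n with
  | zero => simp [Xi'_zero_zero, Matrix.one_apply]
  | succ n ih =>
    rw [Xi'_succ_zero]
    refine ⟨Q_mul_01 _, ?_⟩
    rw [Q_mul_11, ih.1, ih.2]
    ring

lemma Xi'_entries : ∀ n l m : ℕ, n = l + 1 + m →
    Xi' (l+1+m) (l+1) 0 1 = ((Real.sqrt 2:ℂ)⁻¹)^(l+1+m) * (-1:ℂ)^(m+1) * Vc (l+1) m ∧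
    Xi' (l+1+m) (l+1) 1 1 = ((Real.sqrt 2:ℂ)⁻¹)^(l+1+m) * (-1:ℂ)^m * Uc (l+1) m := by
  intro n
  induction n using Nat.strong_induction_on with
  | _ n ih =>
  intro l m hn
  have hrw : l + 1 + m = (l + m) + 1 := by omega
  rw [hrw, Xi'_succ_succ, Matrix.add_apply, Matrix.add_apply, P_mul_01, P_mul_11,
    Q_mul_01, Q_mul_11]
  constructor
  · rcases l with _ | l'
    · have h0m : 0 + m = m := by omega
      rw [h0m, (Xi'_zero_col m).1, (Xi'_zero_col m).2]
      have hV : Vc 1 m = -1 := by simp [Vc]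
      rw [hV]
      ring
    · obtain ⟨h1, h2⟩ := ih (l' + 1 + m) (by omega) l' m rfl
      rw [h1, h2, Vc_succ]
      ring
  · rcases m with _ | m'
    · rw [show l + 0 = l from rfl, Xi'_zero_of_lt (Nat.lt_succ_self l)]
      have hU : Uc (l+1) 0 = 0 := by simp [Uc]
      rw [hU]
      simp
    · have hm : l + (m' + 1) = l + 1 + m' := by omega
      rw [hm]
      obtain ⟨h1, h2⟩ := ih (l + 1 + m') (by omega) l m' rfl
      rw [h1, h2, Uc_succ]
      ring

lemma prod_QmidQ (N : ℕ) (u : Finset (Fin N)) (e : Fin N ↪ Fin (N+1+1))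
    (he : ∀ j, (e j).val = j.val + 1) :
    (List.ofFn fun i : Fin (N+1+1) => if i ∈ u.map e then matP else matQ).prod
      = matQ * (List.ofFn fun j : Fin N => if j ∈ u then matP else matQ).prod * matQ := by
  have hnot : ∀ i : Fin (N+1+1), (∀ j ∈ u, e j ≠ i) → (if i ∈ u.map e then matP else matQ) = matQ := by
    intro i hi
    rw [if_neg]
    simp only [Finset.mem_map]
    rintro ⟨j, hj, rfl⟩
    exact hi j hj rfl
  rw [List.ofFn_succ, List.prod_cons]
  rw [hnot 0 (fun j _ h => by
    have := he j
    rw [h] at this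
    simp at this)]
  rw [List.ofFn_succ', List.prod_concat]
  rw [hnot (Fin.last N).succ (fun j _ h => by
    have := he j
    rw [h] at this
    simp [Fin.val_succ, Fin.last] at this
    omega)]
  rw [← mul_assoc]
  congr 2
  refine congrArg List.prod (congrArg List.ofFn (funext fun j => ?_))
  have : (j.castSucc).succ ∈ u.map e ↔ j ∈ u := by
    simp only [Finset.mem_map]
    constructor
    · rintro ⟨j', hj', hj'e⟩
      have h1 := he j'
      rw [hj'e] at h1
      simp [Fin.val_succ] at h1
      have : j' = j := Fin.ext h1.symm
      rwa [this] at hj'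
    · intro hj
      refine ⟨j, hj, ?_⟩
      apply Fin.ext
      simp [he j, Fin.val_succ]
  simp only [this]

lemma UVsum (l k : ℕ) :
    Uc (l+1) k + Vc (l+1) k
      = ∑ γ ∈ Finset.Icc 1 (min (l+1) (k+1)), (-1:ℂ)^γ * (l.choose (γ-1)) * ((k+1).choose γ) := by
  have h1 : Uc (l+1) k + Vc (l+1) k
      = ∑ h ∈ Finset.range (l+1), (-1:ℂ)^(h+1) * (l.choose h) * ((k+1).choose (h+1)) := by
    rw [Uc, Vc, ← Finset.sum_add_distrib]
    simp only [Nat.add_sub_cancel]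
    refine Finset.sum_congr rfl fun h _ => ?_
    rw [Nat.choose_succ_succ]
    push_cast
    ring
  have h2 : ∑ γ ∈ Finset.Icc 1 (l+1), (-1:ℂ)^γ * (l.choose (γ-1)) * ((k+1).choose γ)
      = ∑ h ∈ Finset.range (l+1), (-1:ℂ)^(h+1) * (l.choose h) * ((k+1).choose (h+1)) := by
    rw [← Finset.Ico_add_one_right_eq_Icc, Finset.sum_Ico_eq_sum_range]
    try simp only [Nat.add_sub_cancel]
    refine Finset.sum_congr rfl fun h _ => ?_
    have e1 : 1 + h = h + 1 := by omega
    rw [e1]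
    simp only [Nat.add_sub_cancel]
  have h3 : ∑ γ ∈ Finset.Icc 1 (min (l+1) (k+1)), (-1:ℂ)^γ * (l.choose (γ-1)) * ((k+1).choose γ)
      = ∑ γ ∈ Finset.Icc 1 (l+1), (-1:ℂ)^γ * (l.choose (γ-1)) * ((k+1).choose γ) := by
    refine Finset.sum_subset (Finset.Icc_subset_Icc_right (min_le_left _ _)) ?_
    intro γ hγ hγ'
    rw [Finset.mem_Icc] at hγ hγ'
    have : k + 1 < γ := by omega
    rw [Nat.choose_eq_zero_of_lt this]
    simp
  rw [h1, h3, h2]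

lemma step1 (l k : ℕ) :
    ∑ s ∈ ((Finset.univ : Finset (Fin (l+k+1+1))).powersetCard l).filter
        (fun s => (⟨0, by omega⟩ : Fin (l+k+1+1)) ∉ s ∧ (⟨l+k+1, by omega⟩ : Fin (l+k+1+1)) ∉ s),
      (List.ofFn (fun i : Fin (l+k+1+1) => if i ∈ s then matP else matQ)).prod
    = matQ * Xi' (l+k) l * matQ := by
  have he_inj : Function.Injective (fun j : Fin (l+k) => (⟨j.1+1, by omega⟩ : Fin (l+k+1+1))) := by
    intro a b h
    simpa [Fin.ext_iff] using h
  set e : Fin (l+k) ↪ Fin (l+k+1+1) := ⟨fun j => ⟨j.1+1, by omega⟩, he_inj⟩ with he_def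
  have he : ∀ j, (e j).val = j.val + 1 := fun j => rfl
  have hset : ((Finset.univ : Finset (Fin (l+k+1+1))).powersetCard l).filter
        (fun s => (⟨0, by omega⟩ : Fin (l+k+1+1)) ∉ s ∧ (⟨l+k+1, by omega⟩ : Fin (l+k+1+1)) ∉ s)
      = ((Finset.univ : Finset (Fin (l+k))).powersetCard l).map (Finset.mapEmbedding e).toEmbedding := by
    rw [← Finset.powersetCard_map]
    ext s
    simp only [Finset.mem_filter, Finset.mem_powersetCard, Finset.subset_univ, true_and]
    constructor
    · rintro ⟨hcard, h0, hlast⟩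
      refine ⟨fun i hi => ?_, hcard⟩
      have hi0 : i ≠ ⟨0, by omega⟩ := fun h => h0 (h ▸ hi)
      have hil : i ≠ ⟨l+k+1, by omega⟩ := fun h => hlast (h ▸ hi)
      simp only [Ne, Fin.ext_iff] at hi0 hil
      have hlt := i.isLt
      simp only [Finset.mem_map]
      refine ⟨⟨i.1 - 1, by omega⟩, Finset.mem_univ _, ?_⟩
      rw [Fin.ext_iff]
      show (i.1 - 1) + 1 = i.1
      omega
    · rintro ⟨hsub, hcard⟩
      refine ⟨hcard, fun h0 => ?_, fun hlast => ?_⟩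
      · obtain ⟨j, -, hj⟩ := Finset.mem_map.1 (hsub h0)
        have hv := he j
        rw [hj] at hv
        simp at hv
      · obtain ⟨j, -, hj⟩ := Finset.mem_map.1 (hsub hlast)
        have hv := he j
        rw [hj] at hv
        simp only [] at hv
        have := j.isLt
        omega
  rw [hset, Finset.sum_map, Xi', Finset.mul_sum, Finset.sum_mul]
  refine Finset.sum_congr rfl fun u hu => ?_
  have hME : (Finset.mapEmbedding e).toEmbedding u = u.map e := rfl
  rw [hME, prod_QmidQ (l+k) u e he]


lemma step1' (l k : ℕ) :
    ∑ s ∈ ((Finset.univ : Finset (Fin (l + (k+2)))).powersetCard l).filter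
        (fun s => (⟨0, by omega⟩ : Fin (l + (k+2))) ∉ s ∧
          (⟨l + (k+2) - 1, by omega⟩ : Fin (l + (k+2))) ∉ s),
      (List.ofFn (fun i : Fin (l + (k+2)) => if i ∈ s then matP else matQ)).prod
    = matQ * Xi' (l+k) l * matQ := step1 l k

theorem q_coefficient (l m : ℕ) (hl : 1 ≤ l) (hm : 2 ≤ m) :
    ∑ s ∈ ((Finset.univ : Finset (Fin (l + m))).powersetCard l).filter
        (fun s => (⟨0, by omega⟩ : Fin (l + m)) ∉ s ∧ (⟨l + m - 1, by omega⟩ : Fin (l + m)) ∉ s),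
      (List.ofFn (fun i : Fin (l + m) => if i ∈ s then matP else matQ)).prod
    = (-((Real.sqrt 2 : ℂ)⁻¹ ^ (l + m - 1) * (-1 : ℂ) ^ m *
        ∑ γ ∈ Finset.Icc 1 (min l (m - 1)),
          (-1 : ℂ) ^ γ * ((l - 1).choose (γ - 1)) * ((m - 1).choose γ))) • matQ := by
  obtain ⟨k, rfl⟩ : ∃ k, m = k + 2 := ⟨m - 2, by omega⟩
  obtain ⟨l', rfl⟩ : ∃ l', l = l' + 1 := ⟨l - 1, by omega⟩
  refine Eq.trans (step1' (l'+1) k) ?_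
  rw [QMQ]
  obtain ⟨h01, h11⟩ := Xi'_entries (l'+1+k) l' k rfl
  rw [h01, h11]
  congr 1
  have hUV := UVsum l' k
  have hsub1 : l' + 1 + (k+2) - 1 = l' + 1 + k + 1 := by omega
  have hsub2 : k + 2 - 1 = k + 1 := by omega
  have hsub3 : l' + 1 - 1 = l' := by omega
  simp only [hsub1, hsub2, hsub3]
  rw [← hUV]
  ring
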